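/- arXiv:1306.6116 — 3 statements merged into one kernel-verified Lean document; each statement's English description precedes it below -/
import Mathlib

section
/- Under the same assumptions (f bounded strictly increasing with asymptotes c₁ at +∞ and −c₂ at −∞; n with density symmetric about 0; σ_i → ∞), lim_{L→∞} (1/L) ∑_{i=1}^L E[f(θ + σ_i n) − f(σ_i n)] = 0 for every θ > 0; i.e., the asymptotic deflection coefficient numerator vanishes. -/
open Filter Finset MeasureTheory

theorem deflection_numerator_vanishes_when_sigma_unbounded
    (f : ℝ → ℝ) (c c₁ c₂ : ℝ)
    (hmono : StrictMono f)
    (hbdd : ∀ x : ℝ, |f x| ≤ c)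
    (htop : Tendsto f atTop (nhds c₁))
    (hbot : Tendsto f atBot (nhds (-c₂)))
    (μ : Measure ℝ) [IsProbabilityMeasure μ]
    (hpos : μ {x : ℝ | 0 < x} = 1 / 2)
    (hneg : μ {x : ℝ | x < 0} = 1 / 2)
    (σ : ℕ → ℝ) (hσpos : ∀ i, 0 < σ i)
    (hσ : Tendsto σ atTop atTop)
    (θ : ℝ) (hθ : 0 < θ) :
    Tendsto
      (fun L : ℕ =>
        (1 / (L : ℝ)) *
          ∑ i ∈ Finset.range L, ∫ x, (f (θ + σ i * x) - f (σ i * x)) ∂μ)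
      atTop (nhds 0) := by
  have hfm : Measurable f := (hmono.monotone).measurable
  -- μ {0} = 0
  have hmu : MeasurableSet {x : ℝ | 0 < x} := measurableSet_lt measurable_const measurable_id
  have hml : MeasurableSet {x : ℝ | x < 0} := measurableSet_lt measurable_id measurable_const
  have hdisj : Disjoint {x : ℝ | 0 < x} {x : ℝ | x < 0} := by
    rw [Set.disjoint_left]
    intro x hx hx'
    exact absurd (show x < 0 from hx') (not_lt.2 (show (0:ℝ) < x from hx).le)
  have hunion : μ ({x : ℝ | 0 < x} ∪ {x : ℝ | x < 0}) = 1 := by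
    rw [measure_union hdisj hml, hpos, hneg, one_div, ENNReal.inv_two_add_inv_two]
  have hcompl : ({x : ℝ | 0 < x} ∪ {x : ℝ | x < 0})ᶜ = {(0:ℝ)} := by
    ext x
    simp only [Set.mem_compl_iff, Set.mem_union, Set.mem_setOf_eq, not_or, not_lt,
      Set.mem_singleton_iff]
    constructor
    · rintro ⟨h1, h2⟩; linarith
    · rintro rfl; exact ⟨le_rfl, le_rfl⟩
  have h0 : μ {(0:ℝ)} = 0 := by
    rw [← hcompl, measure_compl (hmu.union hml) (measure_ne_top _ _), hunion,
      measure_univ, tsub_self]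
  -- the individual integrals tend to 0
  have hint : Tendsto (fun i : ℕ => ∫ x, (f (θ + σ i * x) - f (σ i * x)) ∂μ)
      atTop (nhds 0) := by
    have := MeasureTheory.tendsto_integral_of_dominated_convergence
      (F := fun i : ℕ => fun x : ℝ => f (θ + σ i * x) - f (σ i * x))
      (f := fun _ : ℝ => (0:ℝ)) (bound := fun _ : ℝ => 2 * c) (μ := μ)
      (fun i => ((hfm.comp ((measurable_const.mul measurable_id).const_add θ)).sub
        (hfm.comp (measurable_const.mul measurable_id))).aestronglyMeasurable)
      (integrable_const _)
      (fun i => Filter.Eventually.of_forall fun x => by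
        have h1 := hbdd (θ + σ i * x)
        have h2 := hbdd (σ i * x)
        rw [Real.norm_eq_abs]
        calc |f (θ + σ i * x) - f (σ i * x)|
            ≤ |f (θ + σ i * x)| + |f (σ i * x)| := abs_sub _ _
          _ ≤ 2 * c := by linarith)
      ?_
    · simpa using this
    · rw [ae_iff]
      refine measure_mono_null (fun x hx => ?_) h0
      simp only [Set.mem_setOf_eq] at hx
      by_contra hne
      simp only [Set.mem_singleton_iff] at hne
      apply hx
      rcases lt_or_gt_of_ne hne with hx0 | hx0
      · have hb : Tendsto (fun i : ℕ => σ i * x) atTop atBot :=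
          hσ.atTop_mul_const_of_neg hx0
        have hb' : Tendsto (fun i : ℕ => θ + σ i * x) atTop atBot := by
          simpa using tendsto_atBot_add_const_left atTop θ hb
        have := (hbot.comp hb').sub (hbot.comp hb)
        simpa using this
      · have ha : Tendsto (fun i : ℕ => σ i * x) atTop atTop :=
          hσ.atTop_mul_const hx0
        have ha' : Tendsto (fun i : ℕ => θ + σ i * x) atTop atTop := by
          simpa using tendsto_atTop_add_const_left atTop θ ha
        have := (htop.comp ha').sub (htop.comp ha)
        simpa using this
  -- Cesaro
  have := hint.cesaro
  simpa [one_div] using this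
end

section
/- Let f be the symmetric uniform quantizer with M = 2K+1 levels and step Δ > 0: f(x) = kΔ for (k−1/2)Δ ≤ x < (k+1/2)Δ when |k| ≤ K, f(x) = KΔ for x ≥ (K+1/2)Δ, and f(x) = −KΔ for x ≤ −(K+1/2)Δ. Let n be a random variable whose law assigns positive probability to every nonempty open interval (infinite support with a positive density), let σ > 0 and θ > 0. Then E[f(θ + σn) − f(σn)] > 0. -/
open MeasureTheory

/-- The symmetric uniform quantizer with `2K+1` levels and step `Δ`:
`f x = kΔ` for `(k-1/2)Δ ≤ x < (k+1/2)Δ` when `|k| ≤ K`, saturating at `±KΔ`. -/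
noncomputable def uniformQuantizer (K : ℕ) (Δ : ℝ) (x : ℝ) : ℝ :=
  Δ * (max (-(K : ℤ)) (min (K : ℤ) ⌊x / Δ + 1 / 2⌋) : ℤ)

lemma uniformQuantizer_mono (K : ℕ) (Δ : ℝ) (hΔ : 0 < Δ) {x y : ℝ} (hxy : x ≤ y) :
    uniformQuantizer K Δ x ≤ uniformQuantizer K Δ y := by
  unfold uniformQuantizer
  apply mul_le_mul_of_nonneg_left _ hΔ.le
  exact_mod_cast max_le_max le_rfl (min_le_min le_rfl
    (Int.floor_le_floor (by gcongr)))

lemma uniformQuantizer_abs_le (K : ℕ) (Δ : ℝ) (hΔ : 0 < Δ) (x : ℝ) :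
    |uniformQuantizer K Δ x| ≤ Δ * K := by
  unfold uniformQuantizer
  rw [abs_mul, abs_of_pos hΔ]
  apply mul_le_mul_of_nonneg_left _ hΔ.le
  rw [abs_le]
  constructor
  · exact_mod_cast le_max_left _ _
  · exact_mod_cast max_le (neg_le_self (by positivity)) (min_le_left _ _)

lemma uniformQuantizer_measurable (K : ℕ) (Δ : ℝ) :
    Measurable (uniformQuantizer K Δ) := by
  unfold uniformQuantizer
  apply measurable_const.mul
  exact (measurable_from_top (f := (Int.cast : ℤ → ℝ))).comp
    (measurable_const.max (measurable_const.min
      ((measurable_id.div_const Δ).add_const (1/2)).floor))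

lemma uniformQuantizer_zero (K : ℕ) (Δ : ℝ) (hΔ : 0 < Δ) {x : ℝ}
    (h1 : -(Δ/2) ≤ x) (h2 : x < Δ/2) : uniformQuantizer K Δ x = 0 := by
  unfold uniformQuantizer
  have hfl : ⌊x / Δ + 1/2⌋ = 0 := by
    apply Int.floor_eq_zero_iff.mpr
    constructor
    · have : -(1/2 : ℝ) ≤ x / Δ := by
        rw [le_div_iff₀ hΔ]; linarith
      linarith
    · have : x / Δ < 1/2 := by
        rw [div_lt_iff₀ hΔ]; linarith
      simpa using by linarith
  rw [hfl]
  simp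

lemma uniformQuantizer_ge (K : ℕ) (hK : 1 ≤ K) (Δ : ℝ) (hΔ : 0 < Δ) {x : ℝ}
    (h : Δ/2 ≤ x) : Δ ≤ uniformQuantizer K Δ x := by
  unfold uniformQuantizer
  have hfl : (1 : ℤ) ≤ ⌊x / Δ + 1/2⌋ := by
    apply Int.le_floor.mpr
    have : (1 : ℝ)/2 ≤ x / Δ := by
      rw [le_div_iff₀ hΔ]; linarith
    push_cast; linarith
  have : (1 : ℤ) ≤ max (-(K : ℤ)) (min (K : ℤ) ⌊x / Δ + 1/2⌋) :=
    le_max_of_le_right (le_min (by exact_mod_cast hK) hfl)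
  calc Δ = Δ * 1 := (mul_one Δ).symm
  _ ≤ _ := by apply mul_le_mul_of_nonneg_left _ hΔ.le; exact_mod_cast this

theorem quantizer_deflection_positive
    (K : ℕ) (hK : 1 ≤ K) (Δ : ℝ) (hΔ : 0 < Δ)
    (μ : Measure ℝ) [IsProbabilityMeasure μ]
    (hsupp : ∀ a b : ℝ, a < b → 0 < μ (Set.Ioo a b))
    (σ : ℝ) (hσ : 0 < σ) (θ : ℝ) (hθ : 0 < θ) :
    0 < ∫ x, (uniformQuantizer K Δ (θ + σ * x) - uniformQuantizer K Δ (σ * x)) ∂μ := by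
  set g : ℝ → ℝ := fun x => uniformQuantizer K Δ (θ + σ * x) - uniformQuantizer K Δ (σ * x)
    with hg
  have hg0 : ∀ x, 0 ≤ g x := fun x =>
    sub_nonneg.mpr (uniformQuantizer_mono K Δ hΔ (by linarith))
  have hmeas : Measurable g :=
    ((uniformQuantizer_measurable K Δ).comp
      ((measurable_const.mul measurable_id).const_add θ)).sub
    ((uniformQuantizer_measurable K Δ).comp (measurable_const.mul measurable_id))
  have hint : Integrable g μ := by
    apply Integrable.mono' (integrable_const (2 * (Δ * K))) hmeas.aestronglyMeasurable
    filter_upwards with x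
    calc |g x| ≤ |uniformQuantizer K Δ (θ + σ * x)| + |uniformQuantizer K Δ (σ * x)| :=
          abs_sub _ _
    _ ≤ Δ * K + Δ * K := add_le_add (uniformQuantizer_abs_le K Δ hΔ _)
        (uniformQuantizer_abs_le K Δ hΔ _)
    _ = 2 * (Δ * K) := by ring
  set a : ℝ := max (-(Δ/2)) (Δ/2 - θ) / σ with ha
  set b : ℝ := (Δ/2) / σ with hb
  have hab : a < b :=
    (div_lt_div_iff_of_pos_right hσ).mpr (max_lt (by linarith) (by linarith))
  have hsub : Set.Ioo a b ⊆ Function.support g := by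
    intro x ⟨hxa, hxb⟩
    have h1 : max (-(Δ/2)) (Δ/2 - θ) < σ * x := by
      rw [mul_comm]; exact (div_lt_iff₀ hσ).mp hxa
    have h2 : σ * x < Δ/2 := by
      rw [mul_comm]; exact (lt_div_iff₀ hσ).mp hxb
    have hz : uniformQuantizer K Δ (σ * x) = 0 :=
      uniformQuantizer_zero K Δ hΔ (le_of_lt (lt_of_le_of_lt (le_max_left _ _) h1)) h2
    have hge : Δ ≤ uniformQuantizer K Δ (θ + σ * x) := by
      apply uniformQuantizer_ge K hK Δ hΔ
      have := lt_of_le_of_lt (le_max_right _ _) h1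
      linarith
    have : 0 < g x := by rw [hg]; simp only; rw [hz]; linarith
    exact Function.mem_support.mpr this.ne'
  rw [integral_pos_iff_support_of_nonneg_ae (Filter.Eventually.of_forall hg0) hint]
  exact lt_of_lt_of_le (hsupp a b hab) (measure_mono hsub)
end

section
/- Strong consistency of the bounded-transmission estimator: let f satisfy (A1)–(A2), let n_i be i.i.d. with common law μ, σ_i ∈ (0, σ_max], and suppose h(θ) := lim_{L→∞} (1/L)∑_{i=1}^L E[f(θ + σ_i n_i)] exists and is continuous and strictly increasing with continuous inverse. If z_L := √(P_T)·(1/L)∑_{i=1}^L f(θ₀ + σ_i n_i) + v/√L for fixed θ₀ and fixed channel noise realization scaled by 1/√L, then the estimator θ̂_L := h⁻¹(z_L/√(P_T)) converges to θ₀ almost surely. -/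
open Filter Finset MeasureTheory ProbabilityTheory

/-- Deterministic "filling" lemma: if partial sums have increments bounded by `M`
and the averages converge to `0` along squares, they converge to `0`. -/
lemma fill_between_squares (M : ℝ) (hM : 0 ≤ M) (g : ℕ → ℝ)
    (hg : ∀ m k : ℕ, m ≤ k → |g k - g m| ≤ ((k - m : ℕ) : ℝ) * M)
    (hsq : Tendsto (fun k : ℕ => g (k ^ 2) / ((k ^ 2 : ℕ) : ℝ)) atTop (nhds 0)) :
    Tendsto (fun k : ℕ => g k / (k : ℝ)) atTop (nhds 0) := by
  set b : ℕ → ℝ := fun k => (((2 * k + 1 : ℕ) : ℝ) * M + |g (k ^ 2)|) / ((k ^ 2 : ℕ) : ℝ) with hbdef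
  have hb : Tendsto b atTop (nhds 0) := by
    have h1 : Tendsto (fun k : ℕ => ((2 * k + 1 : ℕ) : ℝ) * M / ((k ^ 2 : ℕ) : ℝ)) atTop
        (nhds 0) := by
      have e : (fun k : ℕ => ((2 * k + 1 : ℕ) : ℝ) * M / ((k ^ 2 : ℕ) : ℝ)) =
          fun k : ℕ => (2 * (1 / (k : ℝ)) + (1 / (k : ℝ)) * (1 / (k : ℝ))) * M := by
        funext k
        rcases Nat.eq_zero_or_pos k with hk | hk
        · subst hk; simp
        · have hk' : (k : ℝ) ≠ 0 := Nat.cast_ne_zero.2 hk.ne'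
          push_cast
          field_simp
      rw [e]
      have := ((tendsto_one_div_atTop_nhds_zero_nat.const_mul 2).add
        (tendsto_one_div_atTop_nhds_zero_nat.mul tendsto_one_div_atTop_nhds_zero_nat)).mul_const M
      simpa using this
    have h2 : Tendsto (fun k : ℕ => |g (k ^ 2)| / ((k ^ 2 : ℕ) : ℝ)) atTop (nhds 0) := by
      have := hsq.abs
      simp only [abs_zero] at this
      have e : (fun k : ℕ => |g (k ^ 2)| / ((k ^ 2 : ℕ) : ℝ)) =
          fun k : ℕ => |g (k ^ 2) / ((k ^ 2 : ℕ) : ℝ)| := by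
        funext k
        rw [abs_div, abs_of_nonneg (by positivity : (0:ℝ) ≤ ((k ^ 2 : ℕ) : ℝ))]
      rw [e]
      exact this
    have := h1.add h2
    simp only [add_zero] at this
    have e : b = fun k : ℕ => ((2 * k + 1 : ℕ) : ℝ) * M / ((k ^ 2 : ℕ) : ℝ) +
        |g (k ^ 2)| / ((k ^ 2 : ℕ) : ℝ) := by
      funext k; exact add_div _ _ _
    rw [e]
    exact this
  have habs : Tendsto (fun k : ℕ => |g k / (k : ℝ)|) atTop (nhds 0) := by
    have hsqrt_tendsto : Tendsto Nat.sqrt atTop atTop := by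
      apply tendsto_atTop_atTop.2
      intro q
      exact ⟨q * q, fun a ha => by
        calc q = Nat.sqrt (q * q) := (Nat.sqrt_eq q).symm
        _ ≤ Nat.sqrt a := Nat.sqrt_le_sqrt ha⟩
    apply squeeze_zero' (g := fun k : ℕ => b (Nat.sqrt k))
    · exact Eventually.of_forall fun k => abs_nonneg _
    · filter_upwards [eventually_ge_atTop 1] with k hk
      set s := Nat.sqrt k with hs
      have hspos : 0 < s := Nat.sqrt_pos.2 hk
      have hs2 : s ^ 2 ≤ k := Nat.sqrt_le' k
      have hklt : k < (s + 1) ^ 2 := Nat.lt_succ_sqrt' k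
      have hcast_pos : (0 : ℝ) < ((s ^ 2 : ℕ) : ℝ) := by positivity
      have hkpos : (0 : ℝ) < (k : ℝ) := by exact_mod_cast hk
      have hnum : |g k| ≤ ((2 * s + 1 : ℕ) : ℝ) * M + |g (s ^ 2)| := by
        have h1 : |g k - g (s ^ 2)| ≤ ((k - s ^ 2 : ℕ) : ℝ) * M := hg _ _ hs2
        have h2 : ((k - s ^ 2 : ℕ) : ℝ) ≤ ((2 * s + 1 : ℕ) : ℝ) := by
          have : k - s ^ 2 ≤ 2 * s + 1 := by
            have : (s + 1) ^ 2 = s ^ 2 + 2 * s + 1 := by ring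
            omega
          exact_mod_cast this
        calc |g k| = |g k - g (s ^ 2) + g (s ^ 2)| := by ring_nf
          _ ≤ |g k - g (s ^ 2)| + |g (s ^ 2)| := abs_add_le _ _
          _ ≤ ((2 * s + 1 : ℕ) : ℝ) * M + |g (s ^ 2)| := by
              gcongr
              exact h1.trans (by gcongr)
      calc |g k / (k : ℝ)| = |g k| / (k : ℝ) := by
            rw [abs_div, abs_of_nonneg (le_of_lt hkpos)]
        _ ≤ |g k| / ((s ^ 2 : ℕ) : ℝ) := by
            apply div_le_div_of_nonneg_left (abs_nonneg _) hcast_pos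
            exact_mod_cast hs2
        _ ≤ (((2 * s + 1 : ℕ) : ℝ) * M + |g (s ^ 2)|) / ((s ^ 2 : ℕ) : ℝ) := by
            gcongr
        _ = b s := rfl
    · exact hb.comp hsqrt_tendsto
  rw [tendsto_zero_iff_abs_tendsto_zero]
  exact habs

/-- Strong law of large numbers for independent, uniformly bounded, mean-zero
random variables. -/
lemma slln_of_indep_bounded {Ω : Type*} [MeasurableSpace Ω] (P : Measure Ω)
    [IsProbabilityMeasure P]
    (X : ℕ → Ω → ℝ) (hXm : ∀ i, Measurable (X i))
    (hind : iIndepFun X P)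
    (M : ℝ) (hM : 0 ≤ M) (hb : ∀ i ω, |X i ω| ≤ M)
    (hmean : ∀ i, ∫ ω, X i ω ∂P = 0) :
    ∀ᵐ ω ∂P, Tendsto (fun L : ℕ => (∑ i ∈ Finset.range L, X i ω) / (L : ℝ))
      atTop (nhds 0) := by
  have hmem2 : ∀ i, MemLp (X i) 2 P := fun i =>
    (memLp_top_of_bound (hXm i).aestronglyMeasurable M
      (Eventually.of_forall fun ω => by simpa [Real.norm_eq_abs] using hb i ω)).mono_exponent
      le_top
  have hSmean : ∀ L : ℕ, (∫ ω, (∑ i ∈ Finset.range L, X i) ω ∂P) = 0 := by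
    intro L
    simp only [Finset.sum_apply]
    rw [integral_finset_sum _ fun i _ => (hmem2 i).integrable one_le_two]
    simp [hmean]
  have hvar : ∀ L : ℕ, variance (∑ i ∈ Finset.range L, X i) P ≤ (L : ℝ) * M ^ 2 := by
    intro L
    rw [IndepFun.variance_sum (fun i _ => hmem2 i)
      (fun i _ j _ hij => hind.indepFun hij)]
    calc ∑ i ∈ Finset.range L, variance (X i) P ≤ ∑ _i ∈ Finset.range L, M ^ 2 := by
          apply Finset.sum_le_sum
          intro i _
          refine (variance_le_expectation_sq (hXm i).aestronglyMeasurable).trans ?_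
          calc (∫ ω, (X i ω) ^ 2 ∂P) ≤ ∫ _ω, M ^ 2 ∂P := by
                apply integral_mono ((hmem2 i).integrable_sq) (integrable_const _)
                intro ω
                have h' := abs_le.1 (hb i ω)
                simp only
                nlinarith [h'.1, h'.2]
            _ = M ^ 2 := by simp
      _ = (L : ℝ) * M ^ 2 := by simp [mul_comm]
  -- Chebyshev events
  set A : ℕ → ℕ → Set Ω := fun j k =>
    {ω | ((k : ℝ) + 1) ^ 2 / ((j : ℝ) + 1) ≤
      |(∑ i ∈ Finset.range ((k + 1) ^ 2), X i) ω -
        P[∑ i ∈ Finset.range ((k + 1) ^ 2), X i]|} with hA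
  have cheb : ∀ j k : ℕ, P (A j k) ≤
      ENNReal.ofReal (M ^ 2 * ((j : ℝ) + 1) ^ 2 * (1 / ((k : ℝ) + 1) ^ 2)) := by
    intro j k
    have hcpos : 0 < ((k : ℝ) + 1) ^ 2 / ((j : ℝ) + 1) := by positivity
    refine (meas_ge_le_variance_div_sq
      (memLp_finsetSum' _ fun i _ => hmem2 i) hcpos).trans ?_
    apply ENNReal.ofReal_le_ofReal
    rw [div_le_iff₀ (by positivity)]
    calc variance (∑ i ∈ Finset.range ((k + 1) ^ 2), X i) P
        ≤ (((k + 1) ^ 2 : ℕ) : ℝ) * M ^ 2 := hvar _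
      _ = M ^ 2 * ((j : ℝ) + 1) ^ 2 * (1 / ((k : ℝ) + 1) ^ 2) *
            (((k : ℝ) + 1) ^ 2 / ((j : ℝ) + 1)) ^ 2 := by
          have hj : ((j : ℝ) + 1) ≠ 0 := by positivity
          have hk : ((k : ℝ) + 1) ≠ 0 := by positivity
          push_cast
          field_simp
  have hBC : ∀ j : ℕ, ∀ᵐ ω ∂P, ∀ᶠ k in atTop, ω ∉ A j k := by
    intro j
    apply ae_eventually_notMem
    have hsum : Summable (fun k : ℕ => M ^ 2 * ((j : ℝ) + 1) ^ 2 * (1 / ((k : ℝ) + 1) ^ 2)) := by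
      apply Summable.mul_left
      have h0 : Summable (fun k : ℕ => 1 / ((k : ℝ)) ^ 2) :=
        Real.summable_one_div_nat_pow.2 one_lt_two
      have := (summable_nat_add_iff 1).2 h0
      simpa using this
    refine ne_top_of_le_ne_top ?_ (ENNReal.tsum_le_tsum (cheb j))
    rw [← ENNReal.ofReal_tsum_of_nonneg (fun k => by positivity) hsum]
    exact ENNReal.ofReal_ne_top
  filter_upwards [ae_all_iff.2 hBC] with ω hω
  apply fill_between_squares M hM (fun L => ∑ i ∈ Finset.range L, X i ω)
  · intro m k hmk
    rw [← Finset.sum_Ico_eq_sub _ hmk]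
    calc |∑ i ∈ Finset.Ico m k, X i ω| ≤ ∑ i ∈ Finset.Ico m k, |X i ω| :=
          Finset.abs_sum_le_sum_abs _ _
      _ ≤ (Finset.Ico m k).card • M := Finset.sum_le_card_nsmul _ _ _ fun i _ => hb i ω
      _ = ((k - m : ℕ) : ℝ) * M := by rw [Nat.card_Ico, nsmul_eq_mul]
  · rw [← tendsto_add_atTop_iff_nat 1]
    rw [NormedAddCommGroup.tendsto_nhds_zero]
    intro ε hε
    obtain ⟨j, hj⟩ := exists_nat_one_div_lt hε
    filter_upwards [hω j] with k hk
    have hk' : |(∑ i ∈ Finset.range ((k + 1) ^ 2), X i) ω -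
        P[∑ i ∈ Finset.range ((k + 1) ^ 2), X i]| <
        ((k : ℝ) + 1) ^ 2 / ((j : ℝ) + 1) := by
      by_contra hcon
      exact hk (by rw [hA]; exact le_of_not_gt hcon)
    rw [hSmean, sub_zero, Finset.sum_apply] at hk'
    have hpos : (0 : ℝ) < (((k + 1) ^ 2 : ℕ) : ℝ) := by positivity
    rw [Real.norm_eq_abs, abs_div, abs_of_nonneg hpos.le, div_lt_iff₀ hpos]
    calc |∑ i ∈ Finset.range ((k + 1) ^ 2), X i ω| <
          ((k : ℝ) + 1) ^ 2 / ((j : ℝ) + 1) := hk'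
      _ ≤ ε * (((k + 1) ^ 2 : ℕ) : ℝ) := by
          rw [div_le_iff₀ (by positivity : (0:ℝ) < (j : ℝ) + 1)]
          push_cast
          have h1 : 1 < ε * ((j : ℝ) + 1) := by
            rw [div_lt_iff₀ (by positivity : (0:ℝ) < (j : ℝ) + 1)] at hj
            linarith
          nlinarith [sq_nonneg ((k : ℝ) + 1), h1]

theorem bounded_transmission_estimator_strongly_consistent
    {Ω : Type*} [MeasurableSpace Ω] (P : Measure Ω) [IsProbabilityMeasure P]
    (f : ℝ → ℝ) (c d : ℝ) (hc : 0 < c) (hd : 0 < d)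
    (hdiff : Differentiable ℝ f)
    (hderiv : ∀ x : ℝ, 0 < deriv f x ∧ deriv f x ≤ d)
    (hbdd : ∀ x : ℝ, |f x| ≤ c)
    (n : ℕ → Ω → ℝ) (hmeas : ∀ i, Measurable (n i))
    (hindep : iIndepFun n P)
    (σ : ℕ → ℝ) (σmax : ℝ) (hσ : ∀ i, 0 < σ i ∧ σ i ≤ σmax)
    (θ₀ : ℝ)
    (h hinv : ℝ → ℝ)
    (hmono : StrictMono h) (hcont : Continuous h)
    (hinv_cont : Continuous hinv) (hinv_left : ∀ y : ℝ, hinv (h y) = y)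
    (hlim : Tendsto
      (fun L : ℕ => (1 / (L : ℝ)) * ∑ i ∈ Finset.range L, ∫ ω, f (θ₀ + σ i * n i ω) ∂P)
      atTop (nhds (h θ₀)))
    (PT : ℝ) (hPT : 0 < PT)
    (v : Ω → ℝ) (C : ℝ) (hv : ∀ᵐ ω ∂P, |v ω| ≤ C) :
    ∀ᵐ ω ∂P,
      Tendsto
        (fun L : ℕ =>
          hinv
            ((Real.sqrt PT * ((1 / (L : ℝ)) * ∑ i ∈ Finset.range L, f (θ₀ + σ i * n i ω)) +
                v ω / Real.sqrt L) / Real.sqrt PT))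
        atTop (nhds θ₀) := by
  have hfc : Continuous f := hdiff.continuous
  set Y : ℕ → Ω → ℝ := fun i ω => f (θ₀ + σ i * n i ω) with hYdef
  have hYm : ∀ i, Measurable (Y i) := fun i =>
    hfc.measurable.comp (measurable_const.add (measurable_const.mul (hmeas i)))
  set m : ℕ → ℝ := fun i => ∫ ω, Y i ω ∂P with hmdef
  have hYint : ∀ i, Integrable (Y i) P := fun i =>
    (memLp_top_of_bound (hYm i).aestronglyMeasurable c
      (Eventually.of_forall fun ω => by
        simpa [Real.norm_eq_abs] using hbdd (θ₀ + σ i * n i ω))).integrable le_top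
  have hmb : ∀ i, |m i| ≤ c := by
    intro i
    have := norm_integral_le_of_norm_le_const (μ := P) (f := Y i) (C := c)
      (Eventually.of_forall fun ω => by
        simpa [Real.norm_eq_abs] using hbdd (θ₀ + σ i * n i ω))
    simpa [Real.norm_eq_abs] using this
  set X : ℕ → Ω → ℝ := fun i ω => Y i ω - m i with hXdef
  have hXm : ∀ i, Measurable (X i) := fun i => (hYm i).sub measurable_const
  have hXindep : iIndepFun X P := by
    have := hindep.comp (fun i x => f (θ₀ + σ i * x) - m i)
      (fun i => ((hfc.comp (continuous_const.add
        (continuous_const.mul continuous_id))).sub continuous_const).measurable)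
    exact this
  have hXb : ∀ i ω, |X i ω| ≤ 2 * c := by
    intro i ω
    calc |X i ω| ≤ |Y i ω| + |m i| := abs_sub _ _
      _ ≤ c + c := add_le_add (hbdd _) (hmb i)
      _ = 2 * c := by ring
  have hXmean : ∀ i, ∫ ω, X i ω ∂P = 0 := by
    intro i
    rw [hXdef]
    simp only
    rw [integral_sub (hYint i) (integrable_const _)]
    simp [hmdef]
  have hslln := slln_of_indep_bounded P X hXm hXindep (2 * c) (by linarith) hXb hXmean
  filter_upwards [hslln] with ω hω
  -- average of Y converges to h θ₀
  have h1 : Tendsto (fun L : ℕ => (1 / (L : ℝ)) * ∑ i ∈ Finset.range L, Y i ω)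
      atTop (nhds (h θ₀)) := by
    have := hω.add hlim
    simp only [zero_add] at this
    convert this using 2 with L
    rw [Finset.sum_sub_distrib]
    ring
  -- channel noise term vanishes
  have hsqrt_nat : Tendsto (fun L : ℕ => Real.sqrt L) atTop atTop := by
    have h1 : Tendsto Real.sqrt atTop atTop := by
      apply tendsto_atTop_atTop.2
      intro q
      refine ⟨(max q 0) ^ 2, fun a ha => ?_⟩
      have := Real.sqrt_le_sqrt ha
      rw [Real.sqrt_sq (le_max_right q 0)] at this
      exact le_trans (le_max_left q 0) this
    exact h1.comp tendsto_natCast_atTop_atTop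
  have h2 : Tendsto (fun L : ℕ => v ω / Real.sqrt L) atTop (nhds 0) := by
    have := hsqrt_nat.inv_tendsto_atTop
    have h3 := this.const_mul (v ω)
    simp only [mul_zero] at h3
    have e : (fun L : ℕ => v ω / Real.sqrt L) =
        fun L : ℕ => v ω * ((fun L : ℕ => Real.sqrt L) L)⁻¹ := by
      funext L; rw [div_eq_mul_inv]
    rw [e]
    exact h3
  have hPTne : Real.sqrt PT ≠ 0 := (Real.sqrt_pos.2 hPT).ne'
  have h3 : Tendsto
      (fun L : ℕ =>
        (Real.sqrt PT * ((1 / (L : ℝ)) * ∑ i ∈ Finset.range L, f (θ₀ + σ i * n i ω)) +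
          v ω / Real.sqrt L) / Real.sqrt PT) atTop (nhds (h θ₀)) := by
    have := h1.add (h2.div_const (Real.sqrt PT))
    simp only [zero_div, add_zero] at this
    convert this using 2 with L
    rw [add_div, mul_comm, mul_div_assoc, div_self hPTne, mul_one]
  have := (hinv_cont.tendsto (h θ₀)).comp h3
  rw [hinv_left θ₀] at this
  exact this
end
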